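/- Let A be a 3×3 (−1,1)-matrix whose rank over ℚ equals k. Then |per A| = per D_{(3,k−1)}, and A can be obtained from D_{(3,k−1)} by standard transformations. -/

import Mathlib

open Matrix

/-- The permanent of a square matrix. -/
def per {n : ℕ} (A : Matrix (Fin n) (Fin n) ℚ) : ℚ :=
  ∑ σ : Equiv.Perm (Fin n), ∏ i, A i (σ i)

/-- The square matrix `D_{(n,l)}`: `-1` on the first `l` diagonal entries, `1` elsewhere. -/
def Dmat (n l : ℕ) : Matrix (Fin n) (Fin n) ℚ :=
  fun i j => if (i : ℕ) = (j : ℕ) ∧ (j : ℕ) < l then -1 else 1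

/-- `A` is obtained from `B` by standard transformations: a finite composition of row
permutations, column permutations, multiplications of rows/columns by `-1`, and
transposition (square case). -/
def StdEquiv {n : ℕ} (A B : Matrix (Fin n) (Fin n) ℚ) : Prop :=
  ∃ (ρ σ : Equiv.Perm (Fin n)) (ε δ : Fin n → ℚ),
    (∀ i, ε i = 1 ∨ ε i = -1) ∧ (∀ j, δ j = 1 ∨ δ j = -1) ∧
    ((∀ i j, A i j = ε i * δ j * B (ρ i) (σ j)) ∨
     (∀ i j, A i j = ε i * δ j * B (σ j) (ρ i)))

/- ### permutations of `Fin 3` as explicit tables -/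

def pf : Fin 6 → Fin 3 → Fin 3 :=
  ![![0,1,2], ![0,2,1], ![1,0,2], ![1,2,0], ![2,0,1], ![2,1,0]]

def pinv : Fin 6 → Fin 6 := ![0,1,2,4,3,5]

def pm (p : Fin 6) : Equiv.Perm (Fin 3) :=
  ⟨pf p, pf (pinv p), by fin_cases p <;> decide, by fin_cases p <;> decide⟩

@[simp] lemma pm_apply (p : Fin 6) (i : Fin 3) : pm p i = pf p i := rfl

lemma pm_bijective : Function.Bijective pm := by
  rw [Fintype.bijective_iff_injective_and_card]
  constructor
  · intro a b h
    fin_cases a <;> fin_cases b <;> first | rfl | (exfalso; exact absurd h (by decide))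
  · simp [Fintype.card_perm, Nat.factorial]

lemma per3 (A : Matrix (Fin 3) (Fin 3) ℚ) :
    per A = ∑ p : Fin 6, ∏ i, A i (pf p i) :=
  (Fintype.sum_bijective pm pm_bijective _ _ (fun _ => rfl)).symm

/- ### Boolean sign tables -/

def bDv : Fin 3 → Fin 3 → Fin 3 → Bool :=
  ![![![false,false,false],![false,false,false],![false,false,false]],
    ![![true,false,false],![false,false,false],![false,false,false]],
    ![![true,false,false],![false,true,false],![false,false,false]]]

lemma hDv : ∀ (l : Fin 3) (i j : Fin 3),
    Dmat 3 (l : ℕ) i j = if bDv l i j then -1 else 1 := by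
  intro l i j; fin_cases l <;> fin_cases i <;> fin_cases j <;> rfl

lemma core16 : ∀ x y z w : Bool,
    ∃ l : Fin 3, ∃ p q : Fin 6, ∃ e d : Fin 3 → Bool,
      ∀ i j, (![![false,false,false],![false,x,y],![false,z,w]] : Fin 3 → Fin 3 → Bool) i j
        = xor (e i) (xor (d j) (bDv l (pf p i) (pf q j))) := by
  intro x y z w
  cases x <;> cases y <;> cases z <;> cases w
  exacts [
    ⟨0,0,0,![false,false,false],![false,false,false], by decide⟩,
    ⟨1,3,3,![false,false,false],![false,false,false], by decide⟩,
    ⟨1,3,2,![false,false,false],![false,false,false], by decide⟩,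
    ⟨1,3,0,![false,false,true],![false,false,false], by decide⟩,
    ⟨1,2,3,![false,false,false],![false,false,false], by decide⟩,
    ⟨1,0,3,![false,false,false],![false,false,true], by decide⟩,
    ⟨2,0,2,![false,true,false],![false,true,false], by decide⟩,
    ⟨2,0,0,![false,true,true],![true,false,false], by decide⟩,
    ⟨1,2,2,![false,false,false],![false,false,false], by decide⟩,
    ⟨2,0,3,![false,true,false],![false,false,true], by decide⟩,
    ⟨1,0,2,![false,false,false],![false,true,false], by decide⟩,
    ⟨2,0,1,![false,true,true],![true,false,false], by decide⟩,
    ⟨1,2,0,![false,true,false],![false,false,false], by decide⟩,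
    ⟨2,0,5,![false,false,false],![false,false,true], by decide⟩,
    ⟨2,0,4,![false,false,false],![false,true,false], by decide⟩,
    ⟨1,0,0,![false,true,true],![true,false,false], by decide⟩]

lemma core16' (b : Fin 3 → Fin 3 → Bool) (h1 : ∀ i, b i 0 = false) (h2 : ∀ j, b 0 j = false) :
    ∃ l : Fin 3, ∃ p q : Fin 6, ∃ e d : Fin 3 → Bool,
      ∀ i j, b i j = xor (e i) (xor (d j) (bDv l (pf p i) (pf q j))) := by
  have hb : b = ![![false,false,false],![false,b 1 1,b 1 2],![false,b 2 1,b 2 2]] := by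
    funext i j
    fin_cases i <;> fin_cases j <;>
      first
        | exact h1 _ | exact h2 _ | rfl
  obtain ⟨l,p,q,e,d,h⟩ := core16 (b 1 1) (b 1 2) (b 2 1) (b 2 2)
  refine ⟨l,p,q,e,d, fun i j => ?_⟩
  rw [show b i j = _ from congrFun (congrFun hb i) j]
  exact h i j

lemma core (b : Fin 3 → Fin 3 → Bool) :
    ∃ l : Fin 3, ∃ p q : Fin 6, ∃ e d : Fin 3 → Bool,
      ∀ i j, b i j = xor (e i) (xor (d j) (bDv l (pf p i) (pf q j))) := by
  obtain ⟨l,p,q,e,d,h⟩ := core16'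
    (fun i j => xor (xor (b i 0) (b 0 0)) (xor (b 0 j) (b i j)))
    (fun i => by
      show xor (xor (b i 0) (b 0 0)) (xor (b 0 0) (b i 0)) = false
      cases b i 0 <;> cases b 0 0 <;> rfl)
    (fun j => by
      show xor (xor (b 0 0) (b 0 0)) (xor (b 0 j) (b 0 j)) = false
      cases b 0 0 <;> cases b 0 j <;> rfl)
  refine ⟨l, p, q, fun i => xor (e i) (xor (b i 0) (b 0 0)),
    fun j => xor (d j) (b 0 j), fun i j => ?_⟩
  have h' : xor (xor (b i 0) (b 0 0)) (xor (b 0 j) (b i j))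
      = xor (e i) (xor (d j) (bDv l (pf p i) (pf q j))) := h i j
  show b i j = xor (xor (e i) (xor (b i 0) (b 0 0)))
      (xor (xor (d j) (b 0 j)) (bDv l (pf p i) (pf q j)))
  revert h'
  cases b i 0 <;> cases b 0 0 <;> cases b 0 j <;> cases b i j <;>
    cases e i <;> cases d j <;> cases bDv l (pf p i) (pf q j) <;> decide

/- ### permanent under standard transformations -/

lemma per_transform {n : ℕ} (B : Matrix (Fin n) (Fin n) ℚ) (ρ σ : Equiv.Perm (Fin n))
    (ε δ : Fin n → ℚ) :
    per (fun i j => ε i * δ j * B (ρ i) (σ j)) = ((∏ i, ε i) * ∏ j, δ j) * per B := by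
  unfold per
  rw [Finset.mul_sum]
  rw [← Equiv.sum_comp ((Equiv.mulLeft σ).trans (Equiv.mulRight ρ⁻¹))
    (fun τ => ((∏ i, ε i) * ∏ j, δ j) * ∏ i, B i (τ i))]
  refine Finset.sum_congr rfl fun τ _ => ?_
  have key : ∏ i, B (ρ i) (σ (τ i)) = ∏ i, B i ((σ * τ * ρ⁻¹) i) := by
    rw [← Equiv.prod_comp ρ (fun i => B i ((σ * τ * ρ⁻¹) i))]
    refine Finset.prod_congr rfl fun i _ => ?_
    simp [Equiv.Perm.mul_apply]
  calc (∏ i, ε i * δ (τ i) * B (ρ i) (σ (τ i)))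
      = ((∏ i, ε i) * ∏ i, δ (τ i)) * ∏ i, B (ρ i) (σ (τ i)) := by
        rw [Finset.prod_mul_distrib, Finset.prod_mul_distrib]
    _ = ((∏ i, ε i) * ∏ j, δ j) * ∏ i, B i ((((Equiv.mulLeft σ).trans (Equiv.mulRight ρ⁻¹)) τ) i) := by
        rw [Equiv.prod_comp τ δ, key]
        rfl

/- ### values of per on the D matrices -/

lemma pf00 : pf 0 0 = 0 := rfl
lemma pf01 : pf 0 1 = 1 := rfl
lemma pf02 : pf 0 2 = 2 := rfl
lemma pf10 : pf 1 0 = 0 := rfl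
lemma pf11 : pf 1 1 = 2 := rfl
lemma pf12 : pf 1 2 = 1 := rfl
lemma pf20 : pf 2 0 = 1 := rfl
lemma pf21 : pf 2 1 = 0 := rfl
lemma pf22 : pf 2 2 = 2 := rfl
lemma pf30 : pf 3 0 = 1 := rfl
lemma pf31 : pf 3 1 = 2 := rfl
lemma pf32 : pf 3 2 = 0 := rfl
lemma pf40 : pf 4 0 = 2 := rfl
lemma pf41 : pf 4 1 = 0 := rfl
lemma pf42 : pf 4 2 = 1 := rfl
lemma pf50 : pf 5 0 = 2 := rfl
lemma pf51 : pf 5 1 = 1 := rfl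
lemma pf52 : pf 5 2 = 0 := rfl

lemma perD0 : per (Dmat 3 0) = 6 := by
  rw [per3, Fin.sum_univ_six]
  simp only [Fin.prod_univ_three, pf00,pf01,pf02,pf10,pf11,pf12,pf20,pf21,pf22,
    pf30,pf31,pf32,pf40,pf41,pf42,pf50,pf51,pf52]
  norm_num [Dmat]

lemma perD1 : per (Dmat 3 1) = 2 := by
  rw [per3, Fin.sum_univ_six]
  simp only [Fin.prod_univ_three, pf00,pf01,pf02,pf10,pf11,pf12,pf20,pf21,pf22,
    pf30,pf31,pf32,pf40,pf41,pf42,pf50,pf51,pf52]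
  norm_num [Dmat]

lemma perD2 : per (Dmat 3 2) = 2 := by
  rw [per3, Fin.sum_univ_six]
  simp only [Fin.prod_univ_three, pf00,pf01,pf02,pf10,pf11,pf12,pf20,pf21,pf22,
    pf30,pf31,pf32,pf40,pf41,pf42,pf50,pf51,pf52]
  norm_num [Dmat]

/- ### rank of the D matrices -/

lemma rank_of_det_ne_zero {m : ℕ} (M : Matrix (Fin m) (Fin m) ℚ) (h : M.det ≠ 0) :
    M.rank = m := by
  rw [Matrix.rank_of_isUnit M ((Matrix.isUnit_iff_isUnit_det M).2 (isUnit_iff_ne_zero.2 h))]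
  simp

lemma rank_D0 : (Dmat 3 0).rank = 1 := by
  refine le_antisymm ?_ ?_
  · have hfac : Dmat 3 0 = !![(1:ℚ);1;1] * !![(1:ℚ),1,1] := by
      ext i j; fin_cases i <;> fin_cases j <;>
        simp [Dmat, Matrix.mul_apply, Fin.sum_univ_succ, Matrix.vecHead, Matrix.vecTail]
    rw [hfac]
    calc (!![(1:ℚ);1;1] * !![(1:ℚ),1,1]).rank ≤ (!![(1:ℚ);1;1]).rank :=
          Matrix.rank_mul_le_left _ _
      _ ≤ Fintype.card (Fin 1) := Matrix.rank_le_card_width _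
      _ = 1 := by simp
  · have hm : !![(1:ℚ),0,0] * Dmat 3 0 * !![(1:ℚ);0;0] = !![(1:ℚ)] := by
      ext i j; fin_cases i <;> fin_cases j <;>
        simp [Dmat, Matrix.mul_apply, Fin.sum_univ_succ, Matrix.vecHead, Matrix.vecTail,
          Matrix.vecMul, dotProduct]
    have h1 : (!![(1:ℚ)]).rank = 1 := by
      rw [rank_of_det_ne_zero _ (by norm_num [Matrix.det_fin_one])]
    calc (1:ℕ) = (!![(1:ℚ),0,0] * Dmat 3 0 * !![(1:ℚ);0;0]).rank := by rw [hm, h1]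
      _ ≤ (!![(1:ℚ),0,0] * Dmat 3 0).rank := Matrix.rank_mul_le_left _ _
      _ ≤ (Dmat 3 0).rank := Matrix.rank_mul_le_right _ _

lemma rank_D1 : (Dmat 3 1).rank = 2 := by
  refine le_antisymm ?_ ?_
  · have hfac : Dmat 3 1 = !![(-1:ℚ),1;1,1;1,1] * !![(1:ℚ),0,0;0,1,1] := by
      ext i j; fin_cases i <;> fin_cases j <;>
        simp [Dmat, Matrix.mul_apply, Fin.sum_univ_succ, Matrix.vecHead, Matrix.vecTail]
    rw [hfac]
    calc (!![(-1:ℚ),1;1,1;1,1] * !![(1:ℚ),0,0;0,1,1]).rank ≤ (!![(-1:ℚ),1;1,1;1,1]).rank :=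
          Matrix.rank_mul_le_left _ _
      _ ≤ Fintype.card (Fin 2) := Matrix.rank_le_card_width _
      _ = 2 := by simp
  · have hm : !![(1:ℚ),0,0;0,1,0] * Dmat 3 1 * !![(1:ℚ),0;0,1;0,0] = !![(-1:ℚ),1;1,1] := by
      ext i j; fin_cases i <;> fin_cases j <;>
        simp [Dmat, Matrix.mul_apply, Fin.sum_univ_succ, Matrix.vecHead, Matrix.vecTail,
          Matrix.vecMul, dotProduct]
    have h1 : (!![(-1:ℚ),1;1,1]).rank = 2 := by
      rw [rank_of_det_ne_zero _ (by norm_num [Matrix.det_fin_two])]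
    calc (2:ℕ) = (!![(1:ℚ),0,0;0,1,0] * Dmat 3 1 * !![(1:ℚ),0;0,1;0,0]).rank := by rw [hm, h1]
      _ ≤ (!![(1:ℚ),0,0;0,1,0] * Dmat 3 1).rank := Matrix.rank_mul_le_left _ _
      _ ≤ (Dmat 3 1).rank := Matrix.rank_mul_le_right _ _

lemma rank_D2 : (Dmat 3 2).rank = 3 :=
  rank_of_det_ne_zero _ (by rw [Matrix.det_fin_three]; norm_num [Dmat])

lemma rank_D (l : Fin 3) : (Dmat 3 (l : ℕ)).rank = (l : ℕ) + 1 := by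
  fin_cases l
  · exact rank_D0
  · exact rank_D1
  · exact rank_D2

lemma perD_nonneg (l : Fin 3) : 0 ≤ per (Dmat 3 (l : ℕ)) := by
  fin_cases l
  · rw [show ((⟨0,by omega⟩ : Fin 3) : ℕ) = 0 from rfl, perD0]; norm_num
  · rw [show ((⟨1,by omega⟩ : Fin 3) : ℕ) = 1 from rfl, perD1]; norm_num
  · rw [show ((⟨2,by omega⟩ : Fin 3) : ℕ) = 2 from rfl, perD2]; norm_num

/- ### main theorem -/

theorem order_three (k : ℕ) (A : Matrix (Fin 3) (Fin 3) ℚ)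
    (hA : ∀ i j, A i j = 1 ∨ A i j = -1) (hrk : A.rank = k) :
    |per A| = per (Dmat 3 (k - 1)) ∧ StdEquiv A (Dmat 3 (k - 1)) := by
  classical
  set b : Fin 3 → Fin 3 → Bool := fun i j => decide (A i j = -1) with hbdef
  have hAb : ∀ i j, A i j = if b i j then -1 else 1 := by
    intro i j
    rcases hA i j with h | h
    · have hne : ¬ (A i j = -1) := by rw [h]; norm_num
      simp only [hbdef, decide_eq_true_eq]
      rw [if_neg hne, h]
    · simp only [hbdef, decide_eq_true_eq]
      rw [if_pos h, h]
  obtain ⟨l, p, q, e, d, hb⟩ := core b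
  set ε : Fin 3 → ℚ := fun i => if e i then -1 else 1 with hεdef
  set δ : Fin 3 → ℚ := fun j => if d j then -1 else 1 with hδdef
  have hε : ∀ i, ε i = 1 ∨ ε i = -1 := fun i => by
    cases h : e i <;> simp [hεdef, h]
  have hδ : ∀ j, δ j = 1 ∨ δ j = -1 := fun j => by
    cases h : d j <;> simp [hδdef, h]
  have hA' : ∀ i j, A i j = ε i * δ j * Dmat 3 (l : ℕ) (pm p i) (pm q j) := by
    intro i j
    rw [hAb i j, hb i j]
    rw [show Dmat 3 (l : ℕ) (pm p i) (pm q j)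
        = if bDv l (pf p i) (pf q j) then -1 else 1 from hDv l (pf p i) (pf q j)]
    simp only [hεdef, hδdef]
    cases e i <;> cases d j <;> cases bDv l (pf p i) (pf q j) <;> norm_num
  -- rank computation
  have hεu : IsUnit (Matrix.diagonal ε).det := by
    rw [Matrix.det_diagonal]
    refine isUnit_iff_ne_zero.2 (Finset.prod_ne_zero_iff.2 fun i _ => ?_)
    rcases hε i with h | h <;> rw [h] <;> norm_num
  have hδu : IsUnit (Matrix.diagonal δ).det := by
    rw [Matrix.det_diagonal]
    refine isUnit_iff_ne_zero.2 (Finset.prod_ne_zero_iff.2 fun j _ => ?_)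
    rcases hδ j with h | h <;> rw [h] <;> norm_num
  have hA2 : A = Matrix.diagonal ε * ((Dmat 3 (l : ℕ)).submatrix (pm p) (pm q))
      * Matrix.diagonal δ := by
    ext i j
    rw [Matrix.mul_diagonal, Matrix.diagonal_mul, Matrix.submatrix_apply, hA' i j]
    ring
  have hrank : A.rank = (l : ℕ) + 1 := by
    rw [hA2, Matrix.rank_mul_eq_left_of_isUnit_det _ _ hδu,
      Matrix.rank_mul_eq_right_of_isUnit_det _ _ hεu,
      Matrix.rank_submatrix, rank_D l]
  have hk : k - 1 = (l : ℕ) := by omega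
  -- permanent computation
  have hAfun : A = fun i j => ε i * δ j * Dmat 3 (l : ℕ) (pm p i) (pm q j) := by
    funext i j; exact hA' i j
  have hper : per A = ((∏ i, ε i) * ∏ j, δ j) * per (Dmat 3 (l : ℕ)) := by
    rw [hAfun]; exact per_transform _ _ _ _ _
  have habs : |(∏ i, ε i) * ∏ j, δ j| = 1 := by
    rw [abs_mul, Finset.abs_prod, Finset.abs_prod]
    have h1 : ∀ i ∈ Finset.univ, |ε i| = 1 := fun i _ => by
      rcases hε i with h | h <;> rw [h] <;> norm_num
    have h2 : ∀ j ∈ Finset.univ, |δ j| = 1 := fun j _ => by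
      rcases hδ j with h | h <;> rw [h] <;> norm_num
    rw [Finset.prod_congr rfl h1, Finset.prod_congr rfl h2]
    simp
  constructor
  · rw [hk, hper, abs_mul, habs, one_mul, abs_of_nonneg (perD_nonneg l)]
  · rw [hk]
    exact ⟨pm p, pm q, ε, δ, hε, hδ, Or.inl (fun i j => hA' i j)⟩
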